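/- arXiv:1312.6875 — 3 statements merged into one kernel-verified Lean document; each statement's English description precedes it below -/
import Mathlib

section
/- Let W be a discrete memoryless channel with R_cr < C and let R ∈ (R_cr, C). If W is a positive channel, i.e., W(y|x) > 0 for all (x,y) ∈ 𝒳×𝒴, then for every Q ∈ P(𝒳) with E_r(R,Q) = E_r(R), the pair (Q,W) is nonsingular. -/
open Real BigOperators
open scoped Classical

namespace RCB

/-- A probability distribution on a finite alphabet. -/
def IsDist {α : Type*} [Fintype α] (Q : α → ℝ) : Prop :=
  (∀ a, 0 ≤ Q a) ∧ ∑ a, Q a = 1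

/-- A discrete memoryless channel, i.e. a stochastic matrix from `X` to `Y`. -/
def IsChannel {X Y : Type*} [Fintype X] [Fintype Y] (W : X → Y → ℝ) : Prop :=
  (∀ x y, 0 ≤ W x y) ∧ ∀ x, ∑ y, W x y = 1

/-- The Gallager function `E_o(ρ, Q)`. -/
noncomputable def Eo {X Y : Type*} [Fintype X] [Fintype Y]
    (W : X → Y → ℝ) (ρ : ℝ) (Q : X → ℝ) : ℝ :=
  - Real.log (∑ y, (∑ x, Q x * W x y ^ (1 / (1 + ρ))) ^ (1 + ρ))

/-- The random coding exponent `E_r(R, Q)` for input distribution `Q`. -/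
noncomputable def ErQ {X Y : Type*} [Fintype X] [Fintype Y]
    (W : X → Y → ℝ) (R : ℝ) (Q : X → ℝ) : ℝ :=
  sSup ((fun ρ => -ρ * R + Eo W ρ Q) '' Set.Icc (0 : ℝ) 1)

/-- The random coding exponent `E_r(R)`. -/
noncomputable def Er {X Y : Type*} [Fintype X] [Fintype Y]
    (W : X → Y → ℝ) (R : ℝ) : ℝ :=
  sSup {v : ℝ | ∃ Q : X → ℝ, IsDist Q ∧ v = ErQ W R Q}

/-- The mutual information `I(Q; W)` (natural logarithm). -/
noncomputable def MI {X Y : Type*} [Fintype X] [Fintype Y]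
    (W : X → Y → ℝ) (Q : X → ℝ) : ℝ :=
  ∑ x, ∑ y, Q x * W x y * Real.log (W x y / ∑ x', Q x' * W x' y)

/-- The capacity `C = max_Q I(Q;W)`. -/
noncomputable def Capacity {X Y : Type*} [Fintype X] [Fintype Y]
    (W : X → Y → ℝ) : ℝ :=
  sSup {v : ℝ | ∃ Q : X → ℝ, IsDist Q ∧ v = MI W Q}

/-- The critical rate of the input distribution `Q`:
`R_cr(Q) = ∂E_o(ρ,Q)/∂ρ |_{ρ=1}`. -/
noncomputable def RcrQ {X Y : Type*} [Fintype X] [Fintype Y]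
    (W : X → Y → ℝ) (Q : X → ℝ) : ℝ :=
  deriv (fun ρ => Eo W ρ Q) 1

/-- The critical rate of the channel: the largest `R` with
`E_r(R) = -R + max_Q E_o(1,Q)`. -/
noncomputable def Rcr {X Y : Type*} [Fintype X] [Fintype Y]
    (W : X → Y → ℝ) : ℝ :=
  sSup {R : ℝ | Er W R = -R + sSup {v : ℝ | ∃ Q : X → ℝ, IsDist Q ∧ v = Eo W 1 Q}}

/-- The rate `R_∞ = inf {R ≥ 0 : E_SP(R) < ∞}` (finiteness of the
sphere-packing exponent expressed as boundedness of the family of affine maps). -/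
noncomputable def Rinf {X Y : Type*} [Fintype X] [Fintype Y]
    (W : X → Y → ℝ) : ℝ :=
  sInf {R : ℝ | 0 ≤ R ∧
    BddAbove {v : ℝ | ∃ (Q : X → ℝ) (ρ : ℝ), IsDist Q ∧ 0 ≤ ρ ∧ v = -ρ * R + Eo W ρ Q}}

/-- The pair `(Q, W)` is singular if `W(y|x) = W(y|z)` whenever
`Q(x)W(y|x)Q(z)W(y|z) > 0`. -/
def Singular {X Y : Type*} (W : X → Y → ℝ) (Q : X → ℝ) : Prop :=
  ∀ x y z, 0 < Q x * W x y * (Q z * W z y) → W x y = W z y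

/-- `ρ^*_R(Q) = -∂E_r(a,Q)/∂a |_{a=R}`. -/
noncomputable def rhoStarQ {X Y : Type*} [Fintype X] [Fintype Y]
    (W : X → Y → ℝ) (Q : X → ℝ) (R : ℝ) : ℝ :=
  - deriv (fun a => ErQ W a Q) R

/-- The number of messages of an `(N, R)` code: `⌈exp (N R)⌉`. -/
noncomputable def nMsgs (N : ℕ) (R : ℝ) : ℕ := ⌈Real.exp (N * R)⌉₊

/-- The `N`-fold memoryless extension of the channel `W`. -/
noncomputable def Wn {X Y : Type*} (W : X → Y → ℝ) {N : ℕ}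
    (c : Fin N → X) (y : Fin N → Y) : ℝ :=
  ∏ n, W (c n) (y n)

/-- The maximal error probability of the code `(f, φ)` over the `N`-fold
memoryless extension of `W`. -/
noncomputable def Pmax {X Y : Type*} [Fintype X] [Fintype Y] {M N : ℕ}
    (W : X → Y → ℝ) (f : Fin M → Fin N → X) (φ : (Fin N → Y) → Fin M) : ℝ :=
  ⨆ m : Fin M, ∑ y : Fin N → Y, Wn W (f m) y * (if φ y ≠ m then (1 : ℝ) else 0)

/-- The ensemble average error probability `P̄_e(Q, N, R)`: the `⌈exp (N R)⌉`
codewords are drawn i.i.d. from `Q^N` and decoded by maximum-likelihood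
decoding, ties counted as errors. -/
noncomputable def Pbar {X Y : Type*} [Fintype X] [Fintype Y]
    (W : X → Y → ℝ) (Q : X → ℝ) (N : ℕ) (R : ℝ) : ℝ :=
  ∑ c : Fin (nMsgs N R) → Fin N → X,
    (∏ m, ∏ n, Q (c m n)) *
      ((nMsgs N R : ℝ)⁻¹ *
        ∑ m, ∑ y : Fin N → Y,
          Wn W (c m) y *
            (if ∃ m', m' ≠ m ∧ Wn W (c m) y ≤ Wn W (c m') y then (1 : ℝ) else 0))

/-- The tilted output distribution `f_ρ`. -/
noncomputable def fRho {X Y : Type*} [Fintype X] [Fintype Y]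
    (W : X → Y → ℝ) (Q : X → ℝ) (ρ : ℝ) (y : Y) : ℝ :=
  (∑ x, Q x * W x y ^ (1 / (1 + ρ))) ^ (1 + ρ) /
    ∑ b, (∑ a, Q a * W a b ^ (1 / (1 + ρ))) ^ (1 + ρ)

/-- The cumulant generating function
`Λ_ρ(λ) = log E_{P_{X,Y}}[exp(λ log (f_ρ(Y)/W(Y|X)))]` with `P_{X,Y} = Q × W`. -/
noncomputable def Lam {X Y : Type*} [Fintype X] [Fintype Y]
    (W : X → Y → ℝ) (Q : X → ℝ) (ρ : ℝ) (t : ℝ) : ℝ :=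
  Real.log (∑ x, ∑ y, Q x * W x y * Real.exp (t * Real.log (fRho W Q ρ y / W x y)))

/-- `P_{X,Y,Z}(S̃_Q)` where `P_{X,Y,Z}(x,y,z) = Q(x)W(y|x)Q(z)` and
`S̃_Q = {(x,y,z) : Q(x)W(y|x)Q(z)W(y|z) > 0}`. -/
noncomputable def PStilde {X Y : Type*} [Fintype X] [Fintype Y]
    (W : X → Y → ℝ) (Q : X → ℝ) : ℝ :=
  ∑ x, ∑ y, ∑ z,
    if 0 < Q x * W x y * (Q z * W z y) then Q x * W x y * Q z else 0

/-- The bivariate cumulant generating function `Λ_{1,ρ}(v)` with respect to the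
conditional distribution `P̃_{X,Y,Z}` of `P_{X,Y,Z}` given `S̃_Q`. -/
noncomputable def Lam1 {X Y : Type*} [Fintype X] [Fintype Y]
    (W : X → Y → ℝ) (Q : X → ℝ) (ρ : ℝ) (v : ℝ × ℝ) : ℝ :=
  Real.log ((∑ x, ∑ y, ∑ z,
    if 0 < Q x * W x y * (Q z * W z y) then
      Q x * W x y * Q z *
        Real.exp (v.1 * Real.log (W x y / fRho W Q ρ y) +
          v.2 * Real.log (W z y / W x y))
    else 0) / PStilde W Q)

/-- The subdifferential of `f : ℝ → ℝ` at `R` (for convex `f`). -/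
def Subderiv (f : ℝ → ℝ) (R : ℝ) : Set ℝ :=
  {g : ℝ | ∀ x, f R + g * (x - R) ≤ f x}

/-- The tilted backward channel `P^ρ_{X|Y}`. -/
noncomputable def PXgY {X Y : Type*} [Fintype X]
    (W : X → Y → ℝ) (Q : X → ℝ) (ρ : ℝ) (x : X) (y : Y) : ℝ :=
  Q x * W x y ^ (1 / (1 + ρ)) / ∑ a, Q a * W a y ^ (1 / (1 + ρ))

/-- The tilted joint distribution `P^ρ_{X,Y}(x,y) = P^ρ_{X|Y}(x|y) P^ρ_Y(y)`. -/
noncomputable def PXY {X Y : Type*} [Fintype X] [Fintype Y]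
    (W : X → Y → ℝ) (Q : X → ℝ) (ρ : ℝ) (x : X) (y : Y) : ℝ :=
  PXgY W Q ρ x y * fRho W Q ρ y


set_option linter.unusedSectionVars false
set_option linter.unusedVariables false
set_option maxHeartbeats 1000000

section Aux
variable {X Y : Type*} [Fintype X] [Fintype Y] [Nonempty X] [Nonempty Y]

lemma exists_pos_of_dist {Q : X → ℝ} (hQ : IsDist Q) : ∃ x, 0 < Q x := by
  by_contra h
  push_neg at h
  have : ∑ x, Q x = 0 := Finset.sum_eq_zero fun x _ => le_antisymm (h x) (hQ.1 x)
  rw [hQ.2] at this; norm_num at this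

lemma inner_pos {W : X → Y → ℝ} (hpos : ∀ x y, 0 < W x y) {Q : X → ℝ} (hQ : IsDist Q)
    (s : ℝ) (y : Y) : 0 < ∑ x, Q x * W x y ^ s := by
  obtain ⟨x0, hx0⟩ := exists_pos_of_dist hQ
  have : 0 < Q x0 * W x0 y ^ s := mul_pos hx0 (rpow_pos_of_pos (hpos x0 y) s)
  exact Finset.sum_pos' (fun x _ => mul_nonneg (hQ.1 x) (rpow_pos_of_pos (hpos x y) s).le)
    ⟨x0, Finset.mem_univ x0, this⟩

lemma exists_wmin (W : X → Y → ℝ) (hpos : ∀ x y, 0 < W x y) :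
    ∃ c : ℝ, 0 < c ∧ ∀ x y, c ≤ W x y := by
  obtain ⟨p, -, hp⟩ := Finset.exists_min_image (Finset.univ : Finset (X × Y))
    (fun p => W p.1 p.2) (by simp [Finset.univ_nonempty])
  exact ⟨W p.1 p.2, hpos _ _, fun x y => hp (x, y) (Finset.mem_univ _)⟩

lemma uniform_isDist : IsDist (fun _ : X => (Fintype.card X : ℝ)⁻¹) := by
  constructor
  · intro a; positivity
  · rw [Finset.sum_const, Finset.card_univ, nsmul_eq_mul]
    rw [mul_inv_cancel₀]
    exact_mod_cast Fintype.card_ne_zero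

lemma Eo_zero (W : X → Y → ℝ) (hW : IsChannel W) {Q : X → ℝ} (hQ : IsDist Q) :
    Eo W 0 Q = 0 := by
  have : ∑ y, (∑ x, Q x * W x y ^ (1 / (1 + (0:ℝ)))) ^ (1 + (0:ℝ)) = 1 := by
    simp only [add_zero, div_one, rpow_one]
    rw [Finset.sum_comm]
    calc ∑ x, ∑ y, Q x * W x y = ∑ x : X, Q x := by
          refine Finset.sum_congr rfl fun x _ => ?_
          rw [← Finset.mul_sum, hW.2 x, mul_one]
      _ = 1 := hQ.2
  rw [Eo, this, Real.log_one, neg_zero]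

lemma Eo_le (W : X → Y → ℝ) (hpos : ∀ x y, 0 < W x y)
    {c : ℝ} (hc : 0 < c) (hcW : ∀ x y, c ≤ W x y)
    {Q : X → ℝ} (hQ : IsDist Q) {ρ : ℝ} (hρ : 0 ≤ ρ) :
    Eo W ρ Q ≤ -Real.log c := by
  have h1ρ : (0:ℝ) < 1 + ρ := by linarith
  have hs : 0 ≤ 1 / (1 + ρ) := by positivity
  have hterm : ∀ y : Y, c ≤ (∑ x, Q x * W x y ^ (1 / (1 + ρ))) ^ (1 + ρ) := by
    intro y
    have hinner : c ^ (1 / (1 + ρ)) ≤ ∑ x, Q x * W x y ^ (1 / (1 + ρ)) := by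
      calc c ^ (1 / (1 + ρ)) = ∑ x, Q x * c ^ (1 / (1 + ρ)) := by
            rw [← Finset.sum_mul, hQ.2, one_mul]
        _ ≤ _ := Finset.sum_le_sum fun x _ =>
            mul_le_mul_of_nonneg_left (rpow_le_rpow hc.le (hcW x y) hs) (hQ.1 x)
    calc c = (c ^ (1 / (1 + ρ))) ^ (1 + ρ) := by
          rw [← Real.rpow_mul hc.le, one_div_mul_cancel h1ρ.ne', rpow_one]
      _ ≤ _ := rpow_le_rpow (rpow_pos_of_pos hc _).le hinner h1ρ.le
  have hF : c ≤ ∑ y, (∑ x, Q x * W x y ^ (1 / (1 + ρ))) ^ (1 + ρ) := by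
    obtain ⟨y0⟩ := ‹Nonempty Y›
    calc c ≤ (∑ x, Q x * W x y0 ^ (1 / (1 + ρ))) ^ (1 + ρ) := hterm y0
      _ ≤ _ := Finset.single_le_sum (f := fun y => (∑ x, Q x * W x y ^ (1 / (1 + ρ))) ^ (1 + ρ))
          (fun y _ => le_trans hc.le (hterm y)) (Finset.mem_univ y0)
  exact neg_le_neg (Real.log_le_log hc hF)

section Bounds
variable (W : X → Y → ℝ) (hpos : ∀ x y, 0 < W x y)
  {c : ℝ} (hc : 0 < c) (hcW : ∀ x y, c ≤ W x y) (R : ℝ)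
include hpos hc hcW

lemma ErQ_image_bdd {Q : X → ℝ} (hQ : IsDist Q) :
    ∀ v ∈ (fun ρ => -ρ * R + Eo W ρ Q) '' Set.Icc (0 : ℝ) 1, v ≤ |R| + -Real.log c := by
  rintro v ⟨ρ, hρ, rfl⟩
  have h1 : -ρ * R ≤ |R| := by
    calc -ρ * R ≤ |(-ρ) * R| := le_abs_self _
      _ = |ρ| * |R| := by rw [abs_mul, abs_neg]
      _ ≤ 1 * |R| := by
          apply mul_le_mul_of_nonneg_right _ (abs_nonneg R)
          rw [abs_of_nonneg hρ.1]; exact hρ.2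
      _ = |R| := one_mul _
  exact add_le_add h1 (Eo_le W hpos hc hcW hQ hρ.1)

lemma ErQ_image_bddAbove {Q : X → ℝ} (hQ : IsDist Q) :
    BddAbove ((fun ρ => -ρ * R + Eo W ρ Q) '' Set.Icc (0 : ℝ) 1) :=
  ⟨|R| + -Real.log c, fun v hv => ErQ_image_bdd W hpos hc hcW R hQ v hv⟩

lemma le_ErQ {Q : X → ℝ} (hQ : IsDist Q) {ρ : ℝ} (hρ : ρ ∈ Set.Icc (0:ℝ) 1) :
    -ρ * R + Eo W ρ Q ≤ ErQ W R Q :=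
  le_csSup (ErQ_image_bddAbove W hpos hc hcW R hQ) ⟨ρ, hρ, rfl⟩

lemma ErQ_le {Q : X → ℝ} (hQ : IsDist Q) : ErQ W R Q ≤ |R| + -Real.log c :=
  csSup_le (⟨_, ⟨0, ⟨le_refl _, zero_le_one⟩, rfl⟩⟩)
    (ErQ_image_bdd W hpos hc hcW R hQ)

lemma Er_bddAbove : BddAbove {v : ℝ | ∃ Q : X → ℝ, IsDist Q ∧ v = ErQ W R Q} := by
  refine ⟨|R| + -Real.log c, ?_⟩
  rintro v ⟨Q, hQ, rfl⟩
  exact ErQ_le W hpos hc hcW R hQ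

lemma le_Er {Q : X → ℝ} (hQ : IsDist Q) : ErQ W R Q ≤ Er W R :=
  le_csSup (Er_bddAbove W hpos hc hcW R) ⟨Q, hQ, rfl⟩

end Bounds

lemma Eo_one_nonneg (W : X → Y → ℝ) (hW : IsChannel W) (hpos : ∀ x y, 0 < W x y)
    {Q : X → ℝ} (hQ : IsDist Q) : 0 ≤ Eo W 1 Q := by
  have key : ∀ y : Y, (∑ x, Q x * W x y ^ (1 / (1 + (1:ℝ)))) ^ (1 + (1:ℝ))
      ≤ ∑ x, Q x * W x y := by
    intro y
    have h2 : (1:ℝ) + 1 = ((2:ℕ):ℝ) := by norm_num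
    have hhalf : (1:ℝ) / (1 + 1) = 1/2 := by norm_num
    rw [hhalf, h2, rpow_natCast]
    have hsq : ∀ x : X, Q x * W x y ^ ((1:ℝ)/2)
        = Real.sqrt (Q x) * Real.sqrt (Q x * W x y) := by
      intro x
      rw [← Real.sqrt_eq_rpow, Real.sqrt_mul (hQ.1 x), ← mul_assoc,
        Real.mul_self_sqrt (hQ.1 x)]
    calc (∑ x, Q x * W x y ^ ((1:ℝ)/2)) ^ 2
        = (∑ x, Real.sqrt (Q x) * Real.sqrt (Q x * W x y)) ^ 2 := by
          rw [Finset.sum_congr rfl fun x _ => hsq x]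
      _ ≤ (∑ x, Real.sqrt (Q x) ^ 2) * ∑ x, Real.sqrt (Q x * W x y) ^ 2 :=
          Finset.sum_mul_sq_le_sq_mul_sq _ _ _
      _ = ∑ x, Q x * W x y := by
          rw [Finset.sum_congr rfl fun x _ => Real.sq_sqrt (hQ.1 x), hQ.2, one_mul]
          exact Finset.sum_congr rfl fun x _ =>
            Real.sq_sqrt (mul_nonneg (hQ.1 x) (hW.1 x y))
  have hsum : ∑ y, (∑ x, Q x * W x y ^ (1 / (1 + (1:ℝ)))) ^ (1 + (1:ℝ)) ≤ 1 := by
    calc _ ≤ ∑ y, ∑ x, Q x * W x y := Finset.sum_le_sum fun y _ => key y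
      _ = 1 := by
        rw [Finset.sum_comm]
        calc ∑ x, ∑ y, Q x * W x y = ∑ x : X, Q x := by
              refine Finset.sum_congr rfl fun x _ => ?_
              rw [← Finset.mul_sum, hW.2 x, mul_one]
          _ = 1 := hQ.2
  have hnn : 0 ≤ ∑ y, (∑ x, Q x * W x y ^ (1 / (1 + (1:ℝ)))) ^ (1 + (1:ℝ)) :=
    Finset.sum_nonneg fun y _ => rpow_nonneg (Finset.sum_nonneg fun x _ =>
      mul_nonneg (hQ.1 x) (rpow_nonneg (hW.1 x y) _)) _
  exact neg_nonneg.mpr (Real.log_nonpos hnn hsum)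

lemma Eo_singular (W : X → Y → ℝ) (hW : IsChannel W) (hpos : ∀ x y, 0 < W x y)
    {Q : X → ℝ} (hQ : IsDist Q) (hsing : Singular W Q) {ρ : ℝ} (hρ : 0 ≤ ρ) :
    Eo W ρ Q = 0 := by
  obtain ⟨x0, hx0⟩ := exists_pos_of_dist hQ
  have h1ρ : (0:ℝ) < 1 + ρ := by linarith
  have key : ∀ y : Y, (∑ x, Q x * W x y ^ (1 / (1 + ρ))) ^ (1 + ρ) = W x0 y := by
    intro y
    have hin : ∑ x, Q x * W x y ^ (1 / (1 + ρ)) = W x0 y ^ (1 / (1 + ρ)) := by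
      calc ∑ x, Q x * W x y ^ (1 / (1 + ρ))
          = ∑ x, Q x * W x0 y ^ (1 / (1 + ρ)) := by
            refine Finset.sum_congr rfl fun x _ => ?_
            rcases eq_or_lt_of_le (hQ.1 x) with h | h
            · rw [← h]; ring
            · have := hsing x y x0 (mul_pos (mul_pos h (hpos x y)) (mul_pos hx0 (hpos x0 y)))
              rw [this]
        _ = W x0 y ^ (1 / (1 + ρ)) := by rw [← Finset.sum_mul, hQ.2, one_mul]
    rw [hin, ← Real.rpow_mul (hW.1 x0 y), one_div_mul_cancel h1ρ.ne', rpow_one]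
  rw [Eo, Finset.sum_congr rfl fun y _ => key y, hW.2 x0, Real.log_one, neg_zero]

lemma Eo_hasDerivAt (W : X → Y → ℝ) (hW : IsChannel W) (hpos : ∀ x y, 0 < W x y)
    {Q : X → ℝ} (hQ : IsDist Q) :
    HasDerivAt (fun ρ => Eo W ρ Q) (MI W Q) 0 := by
  set q : Y → ℝ := fun y => ∑ x, Q x * W x y with hq
  have hqpos : ∀ y, 0 < q y := by
    intro y
    have := inner_pos hpos hQ 1 y
    simpa [hq, rpow_one] using this
  have hs : HasDerivAt (fun ρ : ℝ => 1 / (1 + ρ)) (-1) 0 := by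
    have h1 : HasDerivAt (fun ρ : ℝ => 1 + ρ) 1 0 := (hasDerivAt_id 0).const_add 1
    have := h1.fun_inv (by norm_num)
    simpa [one_div] using this
  have hg : ∀ y : Y, HasDerivAt (fun ρ : ℝ => ∑ x, Q x * W x y ^ (1 / (1 + ρ)))
      (∑ x, Q x * (W x y * Real.log (W x y) * (-1))) 0 := by
    intro y
    have hx : ∀ x : X, HasDerivAt (fun ρ : ℝ => Q x * W x y ^ (1 / (1 + ρ)))
        (Q x * (W x y * Real.log (W x y) * (-1))) 0 := by
      intro x
      have hWx := (hasDerivAt_const (0:ℝ) (W x y)).rpow hs (hpos x y)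
      have hWx' : HasDerivAt (fun ρ : ℝ => W x y ^ (1 / (1 + ρ)))
          (W x y * Real.log (W x y) * (-1)) 0 := by
        convert hWx using 1
        simp [rpow_one]
      exact hWx'.const_mul (Q x)
    exact HasDerivAt.fun_sum (fun x _ => hx x)
  have hh : ∀ y : Y, HasDerivAt
      (fun ρ : ℝ => (∑ x, Q x * W x y ^ (1 / (1 + ρ))) ^ (1 + ρ))
      ((∑ x, Q x * (W x y * Real.log (W x y) * (-1))) + q y * Real.log (q y)) 0 := by
    intro y
    have h1 : HasDerivAt (fun ρ : ℝ => 1 + ρ) 1 0 := (hasDerivAt_id 0).const_add 1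
    have hbase : (0:ℝ) < ∑ x, Q x * W x y ^ (1 / (1 + (0:ℝ))) := inner_pos hpos hQ _ y
    have h2 := (hg y).rpow h1 hbase
    have hq0 : (∑ x, Q x * W x y ^ (1 / (1 + (0:ℝ)))) = q y := by
      simp [hq, rpow_one]
    rw [hq0] at h2
    convert h2 using 1
    rw [show (1:ℝ) + 0 = 1 by norm_num, sub_self, rpow_zero, rpow_one]
    ring
  have hF : HasDerivAt (fun ρ : ℝ => ∑ y, (∑ x, Q x * W x y ^ (1 / (1 + ρ))) ^ (1 + ρ))
      (∑ y, ((∑ x, Q x * (W x y * Real.log (W x y) * (-1))) + q y * Real.log (q y))) 0 :=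
    HasDerivAt.fun_sum fun y _ => hh y
  have hF0 : (∑ y, (∑ x, Q x * W x y ^ (1 / (1 + (0:ℝ)))) ^ (1 + (0:ℝ))) = 1 := by
    simp only [add_zero, div_one, rpow_one]
    rw [Finset.sum_comm]
    calc ∑ x, ∑ y, Q x * W x y = ∑ x : X, Q x := by
          refine Finset.sum_congr rfl fun x _ => ?_
          rw [← Finset.mul_sum, hW.2 x, mul_one]
      _ = 1 := hQ.2
  have hne : (∑ y, (∑ x, Q x * W x y ^ (1 / (1 + (0:ℝ)))) ^ (1 + (0:ℝ))) ≠ 0 := by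
    rw [hF0]; norm_num
  have hlog := (hF.log hne).neg
  rw [hF0] at hlog
  have hEo : HasDerivAt (fun ρ => Eo W ρ Q)
      (-((∑ y, ((∑ x, Q x * (W x y * Real.log (W x y) * (-1))) + q y * Real.log (q y))) / 1)) 0 :=
    hlog
  convert hEo using 1
  rw [div_one, MI, Finset.sum_comm, ← Finset.sum_neg_distrib]
  refine Finset.sum_congr rfl fun y _ => ?_
  have hA : ∑ x, Q x * (W x y * Real.log (W x y) * (-1))
      = -∑ x, Q x * W x y * Real.log (W x y) := by
    rw [← Finset.sum_neg_distrib]; exact Finset.sum_congr rfl fun x _ => by ring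
  have hB : ∀ x : X, Q x * W x y * Real.log (W x y / q y)
      = Q x * W x y * Real.log (W x y) - Q x * W x y * Real.log (q y) := by
    intro x
    rw [Real.log_div (hpos x y).ne' (hqpos y).ne']; ring
  calc ∑ x, Q x * W x y * Real.log (W x y / ∑ x', Q x' * W x' y)
      = ∑ x, (Q x * W x y * Real.log (W x y) - Q x * W x y * Real.log (q y)) :=
        Finset.sum_congr rfl fun x _ => hB x
    _ = (∑ x, Q x * W x y * Real.log (W x y)) - q y * Real.log (q y) := by
        rw [Finset.sum_sub_distrib, ← Finset.sum_mul]
    _ = -((∑ x, Q x * (W x y * Real.log (W x y) * (-1))) + q y * Real.log (q y)) := by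
        rw [hA]; ring

lemma exists_pos_of_deriv {Φ : ℝ → ℝ} {D : ℝ} (hΦ : HasDerivAt Φ D 0)
    (hΦ0 : Φ 0 = 0) (hD : 0 < D) : ∃ ρ ∈ Set.Ioc (0:ℝ) 1, 0 < Φ ρ := by
  rw [hasDerivAt_iff_tendsto_slope] at hΦ
  have h1 : Filter.Tendsto (slope Φ 0) (nhdsWithin 0 (Set.Ioi 0)) (nhds D) :=
    hΦ.mono_left (nhdsWithin_mono 0 (fun x hx => ne_of_gt hx))
  have h2 : ∀ᶠ ρ in nhdsWithin 0 (Set.Ioi 0), 0 < slope Φ 0 ρ :=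
    h1.eventually (eventually_gt_nhds hD)
  have h3 : ∀ᶠ ρ in nhdsWithin (0:ℝ) (Set.Ioi 0), ρ ∈ Set.Ioc (0:ℝ) 1 :=
    Filter.eventually_of_mem (Ioc_mem_nhdsGT_of_mem ⟨le_refl 0, zero_lt_one⟩) fun x hx => hx
  obtain ⟨ρ, hslope, hρ⟩ := (h2.and h3).exists
  refine ⟨ρ, hρ, ?_⟩
  have heq : slope Φ 0 ρ = Φ ρ / ρ := by
    simp [slope_def_field, hΦ0]
  rw [heq] at hslope
  have := mul_pos hslope hρ.1
  rwa [div_mul_cancel₀ _ (ne_of_gt hρ.1)] at this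

end Aux

/-- For a positive channel, every `Q` achieving `E_r(R)` with `R ∈ (R_cr, C)`
forms a nonsingular pair with `W`. -/
theorem statement8 {X Y : Type*} [Fintype X] [Fintype Y] [Nonempty X] [Nonempty Y]
    (W : X → Y → ℝ) (hW : IsChannel W) (hcr : Rcr W < Capacity W)
    (R : ℝ) (hR1 : Rcr W < R) (hR2 : R < Capacity W)
    (hpos : ∀ x y, 0 < W x y) :
    ∀ Q : X → ℝ, IsDist Q → ErQ W R Q = Er W R → ¬ Singular W Q := by
  obtain ⟨c, hc, hcW⟩ := exists_wmin W hpos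
  intro Q hQ hEr hsing
  have hEoQ : ∀ ρ : ℝ, 0 ≤ ρ → Eo W ρ Q = 0 := fun ρ hρ =>
    Eo_singular W hW hpos hQ hsing hρ
  rcases le_or_gt 0 R with hR0 | hR0
  · -- Case A : 0 ≤ R, so ErQ W R Q = 0
    have hErQ : ErQ W R Q = 0 := by
      apply IsGreatest.csSup_eq
      constructor
      · exact ⟨0, ⟨le_refl _, zero_le_one⟩, by
          show -0 * R + Eo W 0 Q = 0
          rw [hEoQ 0 le_rfl]; ring⟩
      · rintro v ⟨ρ, hρ, rfl⟩
        show -ρ * R + Eo W ρ Q ≤ 0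
        rw [hEoQ ρ hρ.1, add_zero]
        nlinarith [hρ.1, hρ.2]
    obtain ⟨Q0, hQ0, hMI⟩ : ∃ Q0 : X → ℝ, IsDist Q0 ∧ R < MI W Q0 := by
      have hC : R < sSup {v : ℝ | ∃ Q' : X → ℝ, IsDist Q' ∧ v = MI W Q'} := hR2
      have hne : {v : ℝ | ∃ Q' : X → ℝ, IsDist Q' ∧ v = MI W Q'}.Nonempty :=
        ⟨_, ⟨_, uniform_isDist, rfl⟩⟩
      by_cases hbdd : BddAbove {v : ℝ | ∃ Q' : X → ℝ, IsDist Q' ∧ v = MI W Q'}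
      · obtain ⟨v, ⟨Q0, hQ0, rfl⟩, hv⟩ := exists_lt_of_lt_csSup hne hC
        exact ⟨Q0, hQ0, hv⟩
      · obtain ⟨v, ⟨Q0, hQ0, rfl⟩, hv⟩ := not_bddAbove_iff.mp hbdd R
        exact ⟨Q0, hQ0, hv⟩
    set Φ : ℝ → ℝ := fun ρ => -ρ * R + Eo W ρ Q0 with hΦdef
    have hline : HasDerivAt (fun ρ : ℝ => -ρ * R) (-R) 0 := by
      simpa using ((hasDerivAt_id (0:ℝ)).neg.mul_const R)
    have hΦ : HasDerivAt Φ (-R + MI W Q0) 0 := hline.add (Eo_hasDerivAt W hW hpos hQ0)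
    have hΦ0 : Φ 0 = 0 := by
      simp [hΦdef, Eo_zero W hW hQ0]
    obtain ⟨ρ, hρ, hΦpos⟩ := exists_pos_of_deriv hΦ hΦ0 (by linarith)
    have h1 : Φ ρ ≤ ErQ W R Q0 := le_ErQ W hpos hc hcW R hQ0 ⟨hρ.1.le, hρ.2⟩
    have h2 : ErQ W R Q0 ≤ Er W R := le_Er W hpos hc hcW R hQ0
    rw [← hEr, hErQ] at h2
    linarith
  · -- Case B : R < 0, so ErQ W R Q = -R
    have hErQ : ErQ W R Q = -R := by
      apply IsGreatest.csSup_eq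
      constructor
      · exact ⟨1, ⟨zero_le_one, le_refl 1⟩, by
          show -1 * R + Eo W 1 Q = -R
          rw [hEoQ 1 zero_le_one]; ring⟩
      · rintro v ⟨ρ, hρ, rfl⟩
        show -ρ * R + Eo W ρ Q ≤ -R
        rw [hEoQ ρ hρ.1, add_zero]
        nlinarith [hρ.1, hρ.2]
    have hErR : Er W R = -R := by rw [← hEr, hErQ]
    have hEo1 : ∀ Q' : X → ℝ, IsDist Q' → Eo W 1 Q' = 0 := by
      intro Q' hQ'
      have hlow := le_ErQ W hpos hc hcW R hQ' (ρ := 1) ⟨zero_le_one, le_refl 1⟩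
      have hup := le_Er W hpos hc hcW R hQ'
      rw [hErR] at hup
      have hnn := Eo_one_nonneg W hW hpos hQ'
      linarith
    have hSE : sSup {v : ℝ | ∃ Q' : X → ℝ, IsDist Q' ∧ v = Eo W 1 Q'} = 0 := by
      have hset : {v : ℝ | ∃ Q' : X → ℝ, IsDist Q' ∧ v = Eo W 1 Q'} = {0} := by
        ext v
        simp only [Set.mem_setOf_eq, Set.mem_singleton_iff]
        constructor
        · rintro ⟨Q', hQ', rfl⟩; exact hEo1 Q' hQ'
        · rintro rfl
          exact ⟨_, uniform_isDist, (hEo1 _ uniform_isDist).symm⟩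
      rw [hset, csSup_singleton]
    have hmem : R ∈ {R' : ℝ |
        Er W R' = -R' + sSup {v : ℝ | ∃ Q' : X → ℝ, IsDist Q' ∧ v = Eo W 1 Q'}} := by
      simp only [Set.mem_setOf_eq, hSE, add_zero]
      exact hErR
    have hbdd : BddAbove {R' : ℝ |
        Er W R' = -R' + sSup {v : ℝ | ∃ Q' : X → ℝ, IsDist Q' ∧ v = Eo W 1 Q'}} := by
      refine ⟨0, ?_⟩
      intro R' hR'
      simp only [Set.mem_setOf_eq, hSE, add_zero] at hR'
      have h1 : (0:ℝ) ≤ ErQ W R' (fun _ => (Fintype.card X : ℝ)⁻¹) := by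
        have := le_ErQ W hpos hc hcW R' uniform_isDist (ρ := 0) ⟨le_refl _, zero_le_one⟩
        rw [Eo_zero W hW uniform_isDist] at this
        simpa using this
      have h2 := le_Er W hpos hc hcW R' uniform_isDist
      rw [hR'] at h2
      linarith
    have hRle : R ≤ Rcr W := by
      rw [Rcr]; exact le_csSup hbdd hmem
    linarith

end RCB
end

section
/- Let W be a discrete memoryless channel with R_cr < C and let Q ∈ P(𝒳) be such that E_r(R,Q) > 0 for some R > R_∞. Then the second derivative of the Gallager function in ρ is strictly negative: ∂²E_o(ρ,Q)/∂ρ² < 0 for every ρ ≥ 0. -/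
open Real BigOperators
open scoped Classical

namespace RCB

lemma sum_sq_identity {ι : Type*} (s : Finset ι) (u v : ι → ℝ) :
    (∑ i ∈ s, u i) * (∑ i ∈ s, u i * v i ^ 2) - (∑ i ∈ s, u i * v i) ^ 2
      = ∑ i ∈ s, ∑ j ∈ s, u i * u j * (v i - v j) ^ 2 / 2 := by
  have h1 : (∑ i ∈ s, u i) * (∑ i ∈ s, u i * v i ^ 2)
      = ∑ i ∈ s, ∑ j ∈ s, u i * (u j * v j ^ 2) := Finset.sum_mul_sum _ _ _ _
  have h2 : (∑ i ∈ s, u i * v i) ^ 2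
      = ∑ i ∈ s, ∑ j ∈ s, (u i * v i) * (u j * v j) := by
    rw [sq]; exact Finset.sum_mul_sum _ _ _ _
  have h3 : (∑ i ∈ s, u i * v i ^ 2) * (∑ j ∈ s, u j)
      = ∑ i ∈ s, ∑ j ∈ s, (u i * v i ^ 2) * u j := Finset.sum_mul_sum _ _ _ _
  have key : ∀ i ∈ s, ∀ j ∈ s, u i * u j * (v i - v j) ^ 2 / 2
      = (u i * (u j * v j ^ 2) + (u i * v i ^ 2) * u j) / 2 - (u i * v i) * (u j * v j) := by
    intro i _ j _; ring
  calc (∑ i ∈ s, u i) * (∑ i ∈ s, u i * v i ^ 2) - (∑ i ∈ s, u i * v i) ^ 2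
      = (∑ i ∈ s, ∑ j ∈ s, u i * (u j * v j ^ 2) + ∑ i ∈ s, ∑ j ∈ s, (u i * v i ^ 2) * u j) / 2
        - ∑ i ∈ s, ∑ j ∈ s, (u i * v i) * (u j * v j) := by
        rw [← h1, ← h2]
        have : (∑ i ∈ s, ∑ j ∈ s, (u i * v i ^ 2) * u j)
            = (∑ i ∈ s, u i) * (∑ i ∈ s, u i * v i ^ 2) := by
          rw [← h3, mul_comm]
        rw [this]; ring
    _ = ∑ i ∈ s, ∑ j ∈ s, u i * u j * (v i - v j) ^ 2 / 2 := by
        rw [← Finset.sum_add_distrib, Finset.sum_div, ← Finset.sum_sub_distrib]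
        refine Finset.sum_congr rfl fun i hi => ?_
        rw [← Finset.sum_add_distrib, Finset.sum_div, ← Finset.sum_sub_distrib]
        exact (Finset.sum_congr rfl fun j hj => (key i hi j hj).symm)

lemma sum_sq_nonneg {ι : Type*} (s : Finset ι) (u v : ι → ℝ)
    (hu : ∀ i ∈ s, 0 ≤ u i) :
    0 ≤ (∑ i ∈ s, u i) * (∑ i ∈ s, u i * v i ^ 2) - (∑ i ∈ s, u i * v i) ^ 2 := by
  rw [sum_sq_identity]
  refine Finset.sum_nonneg fun i hi => Finset.sum_nonneg fun j hj => ?_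
  have := hu i hi; have := hu j hj; positivity

lemma sum_sq_pos {ι : Type*} (s : Finset ι) (u v : ι → ℝ)
    (hu : ∀ i ∈ s, 0 ≤ u i) {i j : ι} (hi : i ∈ s) (hj : j ∈ s)
    (hui : 0 < u i) (huj : 0 < u j) (hv : v i ≠ v j) :
    0 < (∑ i ∈ s, u i) * (∑ i ∈ s, u i * v i ^ 2) - (∑ i ∈ s, u i * v i) ^ 2 := by
  rw [sum_sq_identity]
  have hterm : ∀ a ∈ s, 0 ≤ ∑ b ∈ s, u a * u b * (v a - v b) ^ 2 / 2 := by
    intro a ha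
    refine Finset.sum_nonneg fun b hb => ?_
    have := hu a ha; have := hu b hb; positivity
  refine Finset.sum_pos' hterm ⟨i, hi, ?_⟩
  refine Finset.sum_pos' (fun b hb => by have := hu i hi; have := hu b hb; positivity) ⟨j, hj, ?_⟩
  have hsq : (0:ℝ) < (v i - v j) ^ 2 := by
    have : v i - v j ≠ 0 := sub_ne_zero.mpr hv
    positivity
  positivity

lemma pos_of_mul_pos {a b : ℝ} (ha : 0 ≤ a) (hb : 0 ≤ b) (h : 0 < a * b) :
    0 < a ∧ 0 < b := by
  constructor
  · rcases eq_or_lt_of_le ha with h0 | h0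
    · exfalso; rw [← h0, zero_mul] at h; exact lt_irrefl 0 h
    · exact h0
  · rcases eq_or_lt_of_le hb with h0 | h0
    · exfalso; rw [← h0, mul_zero] at h; exact lt_irrefl 0 h
    · exact h0

section Core
variable {X Y : Type*} [Fintype X] [Fintype Y]

noncomputable def Af (W : X → Y → ℝ) (Q : X → ℝ) (y : Y) (t : ℝ) : ℝ :=
  ∑ x, Q x * W x y ^ (1 / (1 + t))

noncomputable def Bf (W : X → Y → ℝ) (Q : X → ℝ) (y : Y) (t : ℝ) : ℝ :=
  ∑ x, Q x * W x y ^ (1 / (1 + t)) * Real.log (W x y)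

noncomputable def Cf (W : X → Y → ℝ) (Q : X → ℝ) (y : Y) (t : ℝ) : ℝ :=
  ∑ x, Q x * W x y ^ (1 / (1 + t)) * Real.log (W x y) ^ 2

noncomputable def Df (W : X → Y → ℝ) (Q : X → ℝ) (y : Y) (t : ℝ) : ℝ :=
  Real.log (Af W Q y t) - Bf W Q y t / ((1 + t) * Af W Q y t)

noncomputable def Yp (W : X → Y → ℝ) (Q : X → ℝ) : Finset Y :=
  Finset.univ.filter (fun y => ∃ x, 0 < Q x * W x y)

noncomputable def Ff (W : X → Y → ℝ) (Q : X → ℝ) (t : ℝ) : ℝ :=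
  ∑ y ∈ Yp W Q, Af W Q y t ^ (1 + t)

noncomputable def F1 (W : X → Y → ℝ) (Q : X → ℝ) (t : ℝ) : ℝ :=
  ∑ y ∈ Yp W Q, Af W Q y t ^ (1 + t) * Df W Q y t

noncomputable def DD (W : X → Y → ℝ) (Q : X → ℝ) (y : Y) (t : ℝ) : ℝ :=
  ((1 + t)⁻¹) ^ 3 * ((Cf W Q y t * Af W Q y t - Bf W Q y t ^ 2) / Af W Q y t ^ 2)

noncomputable def F2 (W : X → Y → ℝ) (Q : X → ℝ) (t : ℝ) : ℝ :=
  ∑ y ∈ Yp W Q, Af W Q y t ^ (1 + t) * (Df W Q y t ^ 2 + DD W Q y t)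

variable {W : X → Y → ℝ} {Q : X → ℝ}

lemma one_add_pos {t : ℝ} (ht : -1 < t) : (0:ℝ) < 1 + t := by linarith

lemma af_pos (hW : IsChannel W) (hQ : IsDist Q) {y : Y} (hy : y ∈ Yp W Q)
    {t : ℝ} (ht : -1 < t) : 0 < Af W Q y t := by
  obtain ⟨x, hx⟩ : ∃ x, 0 < Q x * W x y := by
    simpa [Yp] using hy
  have hQx : 0 < Q x := by
    rcases lt_or_ge 0 (Q x) with h | h
    · exact h
    · exfalso; nlinarith [hW.1 x y]
  have hWx : 0 < W x y := by
    rcases lt_or_ge 0 (W x y) with h | h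
    · exact h
    · exfalso; nlinarith [hQ.1 x]
  refine Finset.sum_pos' (fun x' _ => mul_nonneg (hQ.1 x') (Real.rpow_nonneg (hW.1 x' y) _)) ⟨x, Finset.mem_univ x, ?_⟩
  exact mul_pos hQx (Real.rpow_pos_of_pos hWx _)

lemma af_zero (hW : IsChannel W) (hQ : IsDist Q) {y : Y} (hy : y ∉ Yp W Q)
    {t : ℝ} (ht : -1 < t) : Af W Q y t = 0 := by
  have h : ∀ x, ¬ (0 < Q x * W x y) := by simpa [Yp] using hy
  refine Finset.sum_eq_zero fun x _ => ?_
  have hx : Q x * W x y = 0 :=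
    le_antisymm (not_lt.mp (h x)) (mul_nonneg (hQ.1 x) (hW.1 x y))
  rcases mul_eq_zero.mp hx with h0 | h0
  · simp [h0]
  · have h1t : (0:ℝ) < 1 + t := by linarith
    rw [h0, Real.zero_rpow (one_div_ne_zero (ne_of_gt h1t)), mul_zero]

lemma ff_eq (hW : IsChannel W) (hQ : IsDist Q) {t : ℝ} (ht : -1 < t) :
    (∑ y, (∑ x, Q x * W x y ^ (1 / (1 + t))) ^ (1 + t)) = Ff W Q t := by
  have h1t : (0:ℝ) < 1 + t := by linarith
  rw [Ff]
  refine (Finset.sum_subset (Finset.subset_univ (Yp W Q)) ?_).symm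
  intro y _ hy
  rw [show (∑ x, Q x * W x y ^ (1 / (1 + t))) = Af W Q y t from rfl,
    af_zero hW hQ hy ht, Real.zero_rpow (ne_of_gt h1t)]

lemma eo_eq (hW : IsChannel W) (hQ : IsDist Q) {t : ℝ} (ht : -1 < t) :
    Eo W t Q = - Real.log (Ff W Q t) := by
  rw [Eo, ff_eq hW hQ ht]

lemma yp_nonempty (hW : IsChannel W) (hQ : IsDist Q) [Nonempty X] : (Yp W Q).Nonempty := by
  obtain ⟨x, hx⟩ : ∃ x, 0 < Q x := by
    by_contra h
    push_neg at h
    have : (∑ a, Q a) ≤ 0 := Finset.sum_nonpos fun a _ => h a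
    rw [hQ.2] at this; linarith
  obtain ⟨y, hy⟩ : ∃ y, 0 < W x y := by
    by_contra h
    push_neg at h
    have : (∑ y, W x y) ≤ 0 := Finset.sum_nonpos fun a _ => h a
    rw [hW.2 x] at this; linarith
  exact ⟨y, by simp [Yp]; exact ⟨x, mul_pos hx hy⟩⟩

lemma ff_pos [Nonempty X] (hW : IsChannel W) (hQ : IsDist Q) {t : ℝ} (ht : -1 < t) :
    0 < Ff W Q t := by
  obtain ⟨y, hy⟩ := yp_nonempty hW hQ (W := W) (Q := Q)
  refine Finset.sum_pos' (fun y' _ => Real.rpow_nonneg ?_ _) ⟨y, hy, ?_⟩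
  · exact Finset.sum_nonneg fun x _ => mul_nonneg (hQ.1 x) (Real.rpow_nonneg (hW.1 x y') _)
  · exact Real.rpow_pos_of_pos (af_pos hW hQ hy ht) _

lemma hasDerivAt_term (hW : IsChannel W) (hQ : IsDist Q) (x : X) (y : Y)
    {t : ℝ} (ht : -1 < t) :
    HasDerivAt (fun t => Q x * W x y ^ (1 / (1 + t)))
      (Q x * W x y ^ (1 / (1 + t)) * Real.log (W x y) * (-((1 + t) ^ 2)⁻¹)) t := by
  have h1t : (0:ℝ) < 1 + t := by linarith
  have hinv : HasDerivAt (fun s : ℝ => 1 / (1 + s)) (-((1 + t) ^ 2)⁻¹) t := by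
    have h := ((hasDerivAt_id t).const_add (1:ℝ)).inv (ne_of_gt h1t)
    have e : -1 / (1 + t) ^ 2 = -((1 + t) ^ 2)⁻¹ := by ring
    simpa [one_div, e, Pi.inv_def] using h
  rcases eq_or_lt_of_le (hW.1 x y) with h0 | h0
  · have hzero : (fun s : ℝ => Q x * W x y ^ (1 / (1 + s))) =ᶠ[nhds t] fun _ => (0:ℝ) := by
      filter_upwards [Ioi_mem_nhds ht] with s hs
      have hs1 : (0:ℝ) < 1 + s := by have := Set.mem_Ioi.mp hs; linarith
      rw [← h0, Real.zero_rpow (one_div_ne_zero (ne_of_gt hs1)), mul_zero]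
    have := (hasDerivAt_const t (0:ℝ)).congr_of_eventuallyEq hzero
    refine this.congr_deriv (Eq.symm ?_)
    rw [← h0, Real.zero_rpow (one_div_ne_zero (ne_of_gt h1t))]
    ring
  · have heq : (fun s : ℝ => Q x * W x y ^ (1 / (1 + s)))
        = fun s : ℝ => Q x * Real.exp (Real.log (W x y) * (1 / (1 + s))) := by
      funext s
      rw [Real.rpow_def_of_pos h0]
    rw [heq]
    have h2 : HasDerivAt (fun s : ℝ => Real.log (W x y) * (1 / (1 + s)))
        (Real.log (W x y) * (-((1 + t) ^ 2)⁻¹)) t := hinv.const_mul _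
    have h3 := (h2.exp).const_mul (Q x)
    refine h3.congr_deriv (Eq.symm ?_)
    rw [Real.rpow_def_of_pos h0]
    ring

lemma hasDerivAt_af (hW : IsChannel W) (hQ : IsDist Q) (y : Y) {t : ℝ} (ht : -1 < t) :
    HasDerivAt (fun t => Af W Q y t) (-((1 + t) ^ 2)⁻¹ * Bf W Q y t) t := by
  have h := HasDerivAt.fun_sum (fun x (_ : x ∈ Finset.univ) => hasDerivAt_term hW hQ x y ht)
  refine h.congr_deriv (Eq.symm ?_)
  rw [Bf, Finset.mul_sum]
  exact Finset.sum_congr rfl fun x _ => by ring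

lemma hasDerivAt_bf (hW : IsChannel W) (hQ : IsDist Q) (y : Y) {t : ℝ} (ht : -1 < t) :
    HasDerivAt (fun t => Bf W Q y t) (-((1 + t) ^ 2)⁻¹ * Cf W Q y t) t := by
  have h := HasDerivAt.fun_sum (fun x (_ : x ∈ Finset.univ) =>
    (hasDerivAt_term hW hQ x y ht).mul_const (Real.log (W x y)))
  refine h.congr_deriv (Eq.symm ?_)
  rw [Cf, Finset.mul_sum]
  exact Finset.sum_congr rfl fun x _ => by ring

lemma hasDerivAt_T (hW : IsChannel W) (hQ : IsDist Q) {y : Y} (hy : y ∈ Yp W Q)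
    {t : ℝ} (ht : -1 < t) :
    HasDerivAt (fun t => Af W Q y t ^ (1 + t)) (Af W Q y t ^ (1 + t) * Df W Q y t) t := by
  have h1t : (0:ℝ) < 1 + t := by linarith
  have hA := af_pos hW hQ hy ht
  have hg : HasDerivAt (fun s : ℝ => 1 + s) 1 t := (hasDerivAt_id t).const_add 1
  have h := (hasDerivAt_af hW hQ y ht).rpow hg hA
  convert h using 1
  rw [Df]
  have e1 : Af W Q y t ^ (1 + t - 1) = Af W Q y t ^ (1 + t) / Af W Q y t := by
    rw [Real.rpow_sub hA, Real.rpow_one]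
  rw [e1]
  field_simp
  ring

lemma hasDerivAt_ff (hW : IsChannel W) (hQ : IsDist Q) {t : ℝ} (ht : -1 < t) :
    HasDerivAt (fun t => Ff W Q t) (F1 W Q t) t := by
  have h := HasDerivAt.fun_sum (fun y (hy : y ∈ Yp W Q) => hasDerivAt_T hW hQ hy ht)
  exact h

lemma hasDerivAt_eo [Nonempty X] (hW : IsChannel W) (hQ : IsDist Q) {t : ℝ} (ht : -1 < t) :
    HasDerivAt (fun t => Eo W t Q) (-(F1 W Q t / Ff W Q t)) t := by
  have h := ((hasDerivAt_ff hW hQ ht).log (ne_of_gt (ff_pos hW hQ ht))).neg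
  have heq : (fun t => Eo W t Q) =ᶠ[nhds t] fun t => - Real.log (Ff W Q t) := by
    filter_upwards [Ioi_mem_nhds ht] with s hs
    exact eo_eq hW hQ (Set.mem_Ioi.mp hs)
  exact h.congr_of_eventuallyEq heq

lemma hasDerivAt_df (hW : IsChannel W) (hQ : IsDist Q) {y : Y} (hy : y ∈ Yp W Q)
    {t : ℝ} (ht : -1 < t) :
    HasDerivAt (fun t => Df W Q y t) (DD W Q y t) t := by
  have h1t : (0:ℝ) < 1 + t := by linarith
  have hA := af_pos hW hQ hy ht
  have hAd := hasDerivAt_af hW hQ y ht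
  have hBd := hasDerivAt_bf hW hQ y ht
  have hlog := hAd.log (ne_of_gt hA)
  have hden : HasDerivAt (fun t => (1 + t) * Af W Q y t)
      (1 * Af W Q y t + (1 + t) * (-((1 + t) ^ 2)⁻¹ * Bf W Q y t)) t :=
    ((hasDerivAt_id t).const_add 1).mul hAd
  have hquot := hBd.div hden (by positivity)
  have h := hlog.sub hquot
  refine h.congr_deriv (Eq.symm ?_)
  rw [DD]
  field_simp
  ring

lemma hasDerivAt_f1 (hW : IsChannel W) (hQ : IsDist Q) {t : ℝ} (ht : -1 < t) :
    HasDerivAt (fun t => F1 W Q t) (F2 W Q t) t := by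
  have h := HasDerivAt.fun_sum (fun y (hy : y ∈ Yp W Q) =>
    (hasDerivAt_T hW hQ hy ht).mul (hasDerivAt_df hW hQ hy ht))
  refine h.congr_deriv (Eq.symm ?_)
  rw [F2]
  refine Finset.sum_congr rfl fun y hy => ?_
  ring

lemma deriv_deriv_eo [Nonempty X] (hW : IsChannel W) (hQ : IsDist Q) {t : ℝ} (ht : -1 < t) :
    deriv (deriv (fun t => Eo W t Q)) t
      = -((F2 W Q t * Ff W Q t - F1 W Q t * F1 W Q t) / Ff W Q t ^ 2) := by
  have heq : deriv (fun t => Eo W t Q) =ᶠ[nhds t] fun s => -(F1 W Q s / Ff W Q s) := by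
    filter_upwards [Ioi_mem_nhds ht] with s hs
    exact (hasDerivAt_eo hW hQ (Set.mem_Ioi.mp hs)).deriv
  rw [Filter.EventuallyEq.deriv_eq heq]
  have h := ((hasDerivAt_f1 hW hQ ht).div (hasDerivAt_ff hW hQ ht)
      (ne_of_gt (ff_pos hW hQ ht))).neg
  exact h.deriv

noncomputable def qt (W : X → Y → ℝ) (Q : X → ℝ) (y : Y) : ℝ :=
  ∑ x, if 0 < Q x * W x y then Q x else 0

lemma ca_sub_b_sq (W : X → Y → ℝ) (Q : X → ℝ) (y : Y) (t : ℝ) :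
    Af W Q y t * Cf W Q y t - Bf W Q y t ^ 2
      = (∑ x, Q x * W x y ^ (1 / (1 + t)))
          * (∑ x, (Q x * W x y ^ (1 / (1 + t))) * Real.log (W x y) ^ 2)
        - (∑ x, (Q x * W x y ^ (1 / (1 + t))) * Real.log (W x y)) ^ 2 := by
  rfl

lemma dd_nonneg (hW : IsChannel W) (hQ : IsDist Q) (y : Y) {t : ℝ} (ht : -1 < t) :
    0 ≤ DD W Q y t := by
  have h1t : (0:ℝ) < 1 + t := by linarith
  have hkey : 0 ≤ Af W Q y t * Cf W Q y t - Bf W Q y t ^ 2 := by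
    rw [ca_sub_b_sq]
    exact sum_sq_nonneg Finset.univ (fun x => Q x * W x y ^ (1 / (1 + t)))
      (fun x => Real.log (W x y))
      (fun x _ => mul_nonneg (hQ.1 x) (Real.rpow_nonneg (hW.1 x y) _))
  rw [DD]
  have : Cf W Q y t * Af W Q y t - Bf W Q y t ^ 2
      = Af W Q y t * Cf W Q y t - Bf W Q y t ^ 2 := by ring
  rw [this]
  positivity

lemma dd_pos (hW : IsChannel W) (hQ : IsDist Q) {x : X} {y : Y} {z : X}
    (hxz : 0 < Q x * W x y * (Q z * W z y)) (hne : W x y ≠ W z y)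
    {t : ℝ} (ht : -1 < t) : 0 < DD W Q y t := by
  have h1t : (0:ℝ) < 1 + t := by linarith
  obtain ⟨hx, hz⟩ := pos_of_mul_pos
    (mul_nonneg (hQ.1 x) (hW.1 x y)) (mul_nonneg (hQ.1 z) (hW.1 z y)) hxz
  obtain ⟨hQx, hWx⟩ := pos_of_mul_pos (hQ.1 x) (hW.1 x y) hx
  obtain ⟨hQz, hWz⟩ := pos_of_mul_pos (hQ.1 z) (hW.1 z y) hz
  have hA : 0 < Af W Q y t := by
    have hy : y ∈ Yp W Q := by simp [Yp]; exact ⟨x, hx⟩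
    exact af_pos hW hQ hy ht
  have hkey : 0 < Af W Q y t * Cf W Q y t - Bf W Q y t ^ 2 := by
    rw [ca_sub_b_sq]
    refine sum_sq_pos Finset.univ (fun x => Q x * W x y ^ (1 / (1 + t)))
      (fun x => Real.log (W x y))
      (fun x _ => mul_nonneg (hQ.1 x) (Real.rpow_nonneg (hW.1 x y) _))
      (Finset.mem_univ x) (Finset.mem_univ z)
      (mul_pos hQx (Real.rpow_pos_of_pos hWx _))
      (mul_pos hQz (Real.rpow_pos_of_pos hWz _)) ?_
    intro heq
    apply hne
    have heq' : Real.log (W x y) = Real.log (W z y) := heq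
    rw [← Real.exp_log hWx, ← Real.exp_log hWz, heq']
  rw [DD]
  have : Cf W Q y t * Af W Q y t - Bf W Q y t ^ 2
      = Af W Q y t * Cf W Q y t - Bf W Q y t ^ 2 := by ring
  rw [this]
  positivity

lemma qt_pos (hW : IsChannel W) (hQ : IsDist Q) {y : Y} (hy : y ∈ Yp W Q) :
    0 < qt W Q y := by
  obtain ⟨x, hx⟩ : ∃ x, 0 < Q x * W x y := by simpa [Yp] using hy
  obtain ⟨hQx, hWx⟩ := pos_of_mul_pos (hQ.1 x) (hW.1 x y) hx
  refine Finset.sum_pos' (fun x' _ => ?_) ⟨x, Finset.mem_univ x, by simp [hx, hQx]⟩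
  split
  · exact hQ.1 x'
  · exact le_refl 0

lemma qt_le_one (hW : IsChannel W) (hQ : IsDist Q) (y : Y) : qt W Q y ≤ 1 := by
  rw [← hQ.2, qt]
  refine Finset.sum_le_sum fun x _ => ?_
  split
  · exact le_refl _
  · exact hQ.1 x

lemma af_singular (hs : Singular W Q) (hW : IsChannel W) (hQ : IsDist Q)
    {y : Y} (hy : y ∈ Yp W Q) :
    ∃ c : ℝ, 0 < c ∧ ∀ t : ℝ, -1 < t →
      Af W Q y t = qt W Q y * c ^ (1 / (1 + t))
      ∧ Bf W Q y t = qt W Q y * c ^ (1 / (1 + t)) * Real.log c := by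
  obtain ⟨x₀, hx₀⟩ : ∃ x, 0 < Q x * W x y := by simpa [Yp] using hy
  obtain ⟨hQx₀, hWx₀⟩ := pos_of_mul_pos (hQ.1 x₀) (hW.1 x₀ y) hx₀
  refine ⟨W x₀ y, hWx₀, fun t ht => ?_⟩
  have h1t : (0:ℝ) < 1 + t := by linarith
  have hterm : ∀ x, Q x * W x y ^ (1 / (1 + t))
      = (if 0 < Q x * W x y then Q x else 0) * W x₀ y ^ (1 / (1 + t)) := by
    intro x
    by_cases hx : 0 < Q x * W x y
    · have := hs x y x₀ (mul_pos hx hx₀)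
      rw [if_pos hx, this]
    · have hx0 : Q x * W x y = 0 :=
        le_antisymm (not_lt.mp hx) (mul_nonneg (hQ.1 x) (hW.1 x y))
      rw [if_neg hx, zero_mul]
      rcases mul_eq_zero.mp hx0 with h0 | h0
      · rw [h0, zero_mul]
      · rw [h0, Real.zero_rpow (one_div_ne_zero (ne_of_gt h1t)), mul_zero]
  constructor
  · rw [Af]
    calc (∑ x, Q x * W x y ^ (1 / (1 + t)))
        = ∑ x, (if 0 < Q x * W x y then Q x else 0) * W x₀ y ^ (1 / (1 + t)) :=
          Finset.sum_congr rfl fun x _ => hterm x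
      _ = qt W Q y * W x₀ y ^ (1 / (1 + t)) := by rw [qt, Finset.sum_mul]
  · rw [Bf]
    have hlog : ∀ x, Q x * W x y ^ (1 / (1 + t)) * Real.log (W x y)
        = (if 0 < Q x * W x y then Q x else 0) * W x₀ y ^ (1 / (1 + t)) * Real.log (W x₀ y) := by
      intro x
      by_cases hx : 0 < Q x * W x y
      · have := hs x y x₀ (mul_pos hx hx₀)
        rw [hterm x, this]
      · rw [hterm x, if_neg hx, zero_mul, zero_mul, zero_mul]
    calc (∑ x, Q x * W x y ^ (1 / (1 + t)) * Real.log (W x y))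
        = ∑ x, (if 0 < Q x * W x y then Q x else 0) * W x₀ y ^ (1 / (1 + t)) * Real.log (W x₀ y) :=
          Finset.sum_congr rfl fun x _ => hlog x
      _ = qt W Q y * W x₀ y ^ (1 / (1 + t)) * Real.log (W x₀ y) := by
          rw [qt, Finset.sum_mul, Finset.sum_mul]

lemma df_singular (hs : Singular W Q) (hW : IsChannel W) (hQ : IsDist Q)
    {y : Y} (hy : y ∈ Yp W Q) {t : ℝ} (ht : -1 < t) :
    Df W Q y t = Real.log (qt W Q y) := by
  obtain ⟨c, hc, hct⟩ := af_singular hs hW hQ hy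
  obtain ⟨hA, hB⟩ := hct t ht
  have h1t : (0:ℝ) < 1 + t := by linarith
  have hq := qt_pos hW hQ hy
  have hcs : (0:ℝ) < c ^ (1 / (1 + t)) := Real.rpow_pos_of_pos hc _
  rw [Df, hA, hB]
  rw [Real.log_mul (ne_of_gt hq) (ne_of_gt hcs)]
  rw [Real.log_rpow hc]
  field_simp
  ring

lemma key_pos [Nonempty X] (hW : IsChannel W) (hQ : IsDist Q) {t : ℝ} (ht : -1 < t)
    (h : ¬ Singular W Q ∨
      (Singular W Q ∧ ∃ y ∈ Yp W Q, ∃ z ∈ Yp W Q, qt W Q y ≠ qt W Q z)) :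
    0 < F2 W Q t * Ff W Q t - F1 W Q t * F1 W Q t := by
  have h1t : (0:ℝ) < 1 + t := by linarith
  have hTnn : ∀ y ∈ Yp W Q, 0 ≤ Af W Q y t ^ (1 + t) := fun y _ =>
    Real.rpow_nonneg (Finset.sum_nonneg fun x _ =>
      mul_nonneg (hQ.1 x) (Real.rpow_nonneg (hW.1 x y) _)) _
  have hsplit : F2 W Q t = (∑ y ∈ Yp W Q, Af W Q y t ^ (1 + t) * Df W Q y t ^ 2)
      + ∑ y ∈ Yp W Q, Af W Q y t ^ (1 + t) * DD W Q y t := by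
    rw [F2, ← Finset.sum_add_distrib]
    exact Finset.sum_congr rfl fun y _ => by ring
  have decomp : F2 W Q t * Ff W Q t - F1 W Q t * F1 W Q t
      = (∑ y ∈ Yp W Q, Af W Q y t ^ (1 + t) * DD W Q y t) * Ff W Q t
        + ((∑ y ∈ Yp W Q, Af W Q y t ^ (1 + t))
            * (∑ y ∈ Yp W Q, Af W Q y t ^ (1 + t) * Df W Q y t ^ 2)
          - (∑ y ∈ Yp W Q, Af W Q y t ^ (1 + t) * Df W Q y t) ^ 2) := by
    rw [hsplit, F1, Ff]; ring
  have hff := ff_pos hW hQ ht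
  have hdd_nn : (0:ℝ) ≤ ∑ y ∈ Yp W Q, Af W Q y t ^ (1 + t) * DD W Q y t :=
    Finset.sum_nonneg fun y hy => mul_nonneg (hTnn y hy) (dd_nonneg hW hQ y ht)
  have hcs_nn : (0:ℝ) ≤ (∑ y ∈ Yp W Q, Af W Q y t ^ (1 + t))
      * (∑ y ∈ Yp W Q, Af W Q y t ^ (1 + t) * Df W Q y t ^ 2)
      - (∑ y ∈ Yp W Q, Af W Q y t ^ (1 + t) * Df W Q y t) ^ 2 :=
    sum_sq_nonneg _ _ _ hTnn
  rcases h with hns | ⟨hs, y, hy, z, hz, hne⟩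
  · rw [Singular] at hns
    push_neg at hns
    obtain ⟨x, y, z, hpos, hWne⟩ := hns
    have hy : y ∈ Yp W Q := by
      have hx := (pos_of_mul_pos (mul_nonneg (hQ.1 x) (hW.1 x y))
        (mul_nonneg (hQ.1 z) (hW.1 z y)) hpos).1
      simp only [Yp, Finset.mem_filter, Finset.mem_univ, true_and]
      exact ⟨x, hx⟩
    have hsum_pos : (0:ℝ) < ∑ y ∈ Yp W Q, Af W Q y t ^ (1 + t) * DD W Q y t := by
      refine Finset.sum_pos'
        (fun y' hy' => mul_nonneg (hTnn y' hy') (dd_nonneg hW hQ y' ht)) ⟨y, hy, ?_⟩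
      exact mul_pos (Real.rpow_pos_of_pos (af_pos hW hQ hy ht) _)
        (dd_pos hW hQ hpos hWne ht)
    rw [decomp]
    have := mul_pos hsum_pos hff
    linarith
  · have hcs_pos : (0:ℝ) < (∑ y ∈ Yp W Q, Af W Q y t ^ (1 + t))
        * (∑ y ∈ Yp W Q, Af W Q y t ^ (1 + t) * Df W Q y t ^ 2)
        - (∑ y ∈ Yp W Q, Af W Q y t ^ (1 + t) * Df W Q y t) ^ 2 := by
      refine sum_sq_pos _ _ _ hTnn hy hz
        (Real.rpow_pos_of_pos (af_pos hW hQ hy ht) _)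
        (Real.rpow_pos_of_pos (af_pos hW hQ hz ht) _) ?_
      intro heq
      apply hne
      have heq' : Df W Q y t = Df W Q z t := heq
      rw [df_singular hs hW hQ hy ht, df_singular hs hW hQ hz ht] at heq'
      have hqy := qt_pos hW hQ hy
      have hqz := qt_pos hW hQ hz
      rw [← Real.exp_log hqy, ← Real.exp_log hqz, heq']
    rw [decomp]
    have := mul_nonneg hdd_nn (le_of_lt hff)
    linarith

lemma ff_zero [Nonempty X] (hW : IsChannel W) (hQ : IsDist Q) : Ff W Q 0 = 1 := by
  have h := ff_eq hW hQ (t := 0) (by norm_num)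
  rw [← h]
  have e1 : ∀ y : Y, (∑ x, Q x * W x y ^ ((1:ℝ) / (1 + 0))) ^ ((1:ℝ) + 0)
      = ∑ x, Q x * W x y := by
    intro y
    rw [show ((1:ℝ) + 0) = 1 by norm_num, Real.rpow_one]
    refine Finset.sum_congr rfl fun x _ => ?_
    rw [show ((1:ℝ) / 1) = 1 by norm_num, Real.rpow_one]
  calc (∑ y, (∑ x, Q x * W x y ^ ((1:ℝ) / (1 + 0))) ^ ((1:ℝ) + 0))
      = ∑ y, ∑ x, Q x * W x y := Finset.sum_congr rfl fun y _ => e1 y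
    _ = ∑ x, ∑ y, Q x * W x y := Finset.sum_comm
    _ = ∑ x, Q x * ∑ y, W x y := Finset.sum_congr rfl fun x _ => (Finset.mul_sum _ _ _).symm
    _ = ∑ x, Q x := Finset.sum_congr rfl fun x _ => by rw [hW.2 x, mul_one]
    _ = 1 := hQ.2

lemma eo_linear [Nonempty X] (hW : IsChannel W) (hQ : IsDist Q) (hs : Singular W Q)
    (huni : ∀ y ∈ Yp W Q, ∀ z ∈ Yp W Q, qt W Q y = qt W Q z)
    {y₀ : Y} (hy₀ : y₀ ∈ Yp W Q) {t : ℝ} (ht : -1 < t) :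
    Eo W t Q = t * (- Real.log (qt W Q y₀)) := by
  have h1t : (0:ℝ) < 1 + t := by linarith
  have hq := qt_pos hW hQ hy₀
  have hT : ∀ y ∈ Yp W Q, Af W Q y t ^ (1 + t)
      = qt W Q y₀ ^ t * Af W Q y 0 ^ ((1:ℝ) + 0) := by
    intro y hy
    obtain ⟨c, hc, hct⟩ := af_singular hs hW hQ hy
    have hA := (hct t ht).1
    have hA0 := (hct 0 (by norm_num)).1
    rw [hA, hA0, huni y hy y₀ hy₀]
    rw [show ((1:ℝ) + 0) = 1 by norm_num, Real.rpow_one]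
    rw [show ((1:ℝ) / 1) = 1 by norm_num, Real.rpow_one]
    have h1 : (c ^ ((1:ℝ) / (1 + t))) ^ (1 + t) = c := by
      rw [← Real.rpow_mul (le_of_lt hc), one_div_mul_cancel (ne_of_gt h1t), Real.rpow_one]
    have h2 : qt W Q y₀ ^ ((1:ℝ) + t) = qt W Q y₀ * qt W Q y₀ ^ t := by
      rw [Real.rpow_add hq, Real.rpow_one]
    rw [Real.mul_rpow (le_of_lt hq) (Real.rpow_nonneg (le_of_lt hc) _), h1, h2]
    ring
  have hFf : Ff W Q t = qt W Q y₀ ^ t * Ff W Q 0 := by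
    rw [Ff, Ff, Finset.mul_sum]
    exact Finset.sum_congr rfl hT
  rw [eo_eq hW hQ ht, hFf, ff_zero hW hQ, mul_one, Real.log_rpow hq]
  ring

lemma eo_le_card [Nonempty X] (hW : IsChannel W) {Q' : X → ℝ} (hQ' : IsDist Q')
    {ρ : ℝ} (hρ : 0 ≤ ρ) :
    Eo W ρ Q' ≤ (1 + ρ) * Real.log (Fintype.card X) := by
  have h1ρ : (0:ℝ) < 1 + ρ := by linarith
  have hcard : (0:ℝ) < (Fintype.card X : ℝ) := by
    exact_mod_cast Fintype.card_pos
  obtain ⟨x₀, -, hx₀⟩ := Finset.exists_max_image Finset.univ Q' ⟨Classical.arbitrary X, Finset.mem_univ _⟩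
  have hQx₀ : (Fintype.card X : ℝ)⁻¹ ≤ Q' x₀ := by
    have h1 : (1:ℝ) ≤ (Fintype.card X : ℝ) * Q' x₀ := by
      rw [← hQ'.2]
      calc (∑ a, Q' a) ≤ ∑ _a : X, Q' x₀ :=
            Finset.sum_le_sum fun a _ => hx₀ a (Finset.mem_univ a)
        _ = (Fintype.card X : ℝ) * Q' x₀ := by
            rw [Finset.sum_const, nsmul_eq_mul]; rfl
    rw [inv_eq_one_div, div_le_iff₀ hcard]
    nlinarith
  have hQx₀pos : 0 < Q' x₀ := lt_of_lt_of_le (by positivity) hQx₀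
  have hlow : ((Fintype.card X : ℝ)⁻¹) ^ (1 + ρ)
      ≤ ∑ y, (∑ x, Q' x * W x y ^ (1 / (1 + ρ))) ^ (1 + ρ) := by
    have step1 : ∀ y, (Q' x₀ * W x₀ y ^ (1 / (1 + ρ))) ^ (1 + ρ)
        ≤ (∑ x, Q' x * W x y ^ (1 / (1 + ρ))) ^ (1 + ρ) := by
      intro y
      refine Real.rpow_le_rpow (mul_nonneg (hQ'.1 x₀) (Real.rpow_nonneg (hW.1 x₀ y) _)) ?_ (le_of_lt h1ρ)
      exact Finset.single_le_sum (fun x _ =>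
        mul_nonneg (hQ'.1 x) (Real.rpow_nonneg (hW.1 x y) _)) (Finset.mem_univ x₀)
    have step2 : ∀ y, (Q' x₀ * W x₀ y ^ (1 / (1 + ρ))) ^ (1 + ρ)
        = Q' x₀ ^ (1 + ρ) * W x₀ y := by
      intro y
      rw [Real.mul_rpow (hQ'.1 x₀) (Real.rpow_nonneg (hW.1 x₀ y) _)]
      congr 1
      rw [← Real.rpow_mul (hW.1 x₀ y), one_div_mul_cancel (ne_of_gt h1ρ), Real.rpow_one]
    calc ((Fintype.card X : ℝ)⁻¹) ^ (1 + ρ)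
        = ((Fintype.card X : ℝ)⁻¹) ^ (1 + ρ) * ∑ y, W x₀ y := by rw [hW.2 x₀, mul_one]
      _ = ∑ y, ((Fintype.card X : ℝ)⁻¹) ^ (1 + ρ) * W x₀ y := by rw [Finset.mul_sum]
      _ ≤ ∑ y, Q' x₀ ^ (1 + ρ) * W x₀ y := by
          refine Finset.sum_le_sum fun y _ => ?_
          exact mul_le_mul_of_nonneg_right
            (Real.rpow_le_rpow (by positivity) hQx₀ (le_of_lt h1ρ)) (hW.1 x₀ y)
      _ = ∑ y, (Q' x₀ * W x₀ y ^ (1 / (1 + ρ))) ^ (1 + ρ) :=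
          (Finset.sum_congr rfl fun y _ => (step2 y).symm)
      _ ≤ ∑ y, (∑ x, Q' x * W x y ^ (1 / (1 + ρ))) ^ (1 + ρ) :=
          Finset.sum_le_sum fun y _ => step1 y
  have hlowpos : (0:ℝ) < ((Fintype.card X : ℝ)⁻¹) ^ (1 + ρ) := by positivity
  rw [Eo]
  have hlog := Real.log_le_log hlowpos hlow
  rw [Real.log_rpow (by positivity : (0:ℝ) < (Fintype.card X : ℝ)⁻¹), Real.log_inv] at hlog
  linarith

end Core

theorem statement10_aux {X Y : Type*} [Fintype X] [Fintype Y] [Nonempty X]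
    (W : X → Y → ℝ) (hW : IsChannel W) (Q : X → ℝ) (hQ : IsDist Q)
    (hEr : ∃ R : ℝ, Rinf W < R ∧ 0 < ErQ W R Q) :
    ∀ ρ : ℝ, 0 ≤ ρ → deriv (deriv (fun t => Eo W t Q)) ρ < 0 := by
  intro ρ hρ
  have ht : (-1:ℝ) < ρ := by linarith
  have hcase : ¬ Singular W Q ∨
      (Singular W Q ∧ ∃ y ∈ Yp W Q, ∃ z ∈ Yp W Q, qt W Q y ≠ qt W Q z) := by
    by_cases hs : Singular W Q
    · right
      refine ⟨hs, ?_⟩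
      by_contra huni
      push_neg at huni
      obtain ⟨R, hR1, hR2⟩ := hEr
      obtain ⟨y₀, hy₀⟩ := yp_nonempty hW hQ
      have hq := qt_pos hW hQ hy₀
      have hq1 := qt_le_one hW hQ y₀
      set m : ℝ := - Real.log (qt W Q y₀) with hm
      have hm0 : 0 ≤ m := by
        have := Real.log_nonpos (le_of_lt hq) hq1
        simp only [hm]; linarith
      have hlin : ∀ t : ℝ, -1 < t → Eo W t Q = t * m := fun t ht' =>
        eo_linear hW hQ hs huni hy₀ ht'
      have hRm : R < m := by
        by_contra hge
        push_neg at hge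
        have hle : ErQ W R Q ≤ 0 := by
          apply Real.sSup_le _ (le_refl 0)
          rintro v ⟨ρ', hρ', rfl⟩
          show -ρ' * R + Eo W ρ' Q ≤ 0
          rw [hlin ρ' (by linarith [hρ'.1])]
          nlinarith [hρ'.1, hρ'.2]
        linarith
      have hRinf : m ≤ Rinf W := by
        rw [Rinf]
        have hL : (0:ℝ) ≤ Real.log (Fintype.card X) := by
          apply Real.log_nonneg
          exact_mod_cast Fintype.card_pos
        refine le_csInf ⟨2 * Real.log (Fintype.card X), ?_, ?_⟩ ?_
        · positivity
        · refine ⟨Real.log (Fintype.card X), ?_⟩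
          rintro v ⟨Q', ρ', hQ', hρ', rfl⟩
          have := eo_le_card hW hQ' hρ'
          nlinarith
        · rintro b ⟨hb0, M, hM⟩
          by_contra hbm
          push_neg at hbm
          have hmb : 0 < m - b := by linarith
          set ρ' : ℝ := (|M| + 1) / (m - b) with hρ'
          have hρ'0 : 0 ≤ ρ' := by positivity
          have hmem : (-ρ' * b + Eo W ρ' Q) ∈
              {v : ℝ | ∃ (Q'' : X → ℝ) (ρ'' : ℝ), IsDist Q'' ∧ 0 ≤ ρ'' ∧
                v = -ρ'' * b + Eo W ρ'' Q''} := ⟨Q, ρ', hQ, hρ'0, rfl⟩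
          have hlev := hM hmem
          rw [hlin ρ' (by linarith)] at hlev
          have hval : -ρ' * b + ρ' * m = |M| + 1 := by
            have h2 : ρ' * (m - b) = |M| + 1 := by
              rw [hρ', div_mul_cancel₀ _ (ne_of_gt hmb)]
            linarith [h2]
          rw [hval] at hlev
          have := le_abs_self M
          linarith
      linarith
    · left; exact hs
  rw [deriv_deriv_eo hW hQ ht]
  have hpos := key_pos hW hQ ht hcase
  have hff := ff_pos hW hQ ht
  have hdiv : 0 < (F2 W Q ρ * Ff W Q ρ - F1 W Q ρ * F1 W Q ρ) / Ff W Q ρ ^ 2 :=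
    div_pos hpos (by positivity)
  linarith


/-- Strict concavity of the Gallager function: `∂²E_o(ρ,Q)/∂ρ² < 0` for all
`ρ ≥ 0`. -/
theorem statement10 {X Y : Type*} [Fintype X] [Fintype Y] [Nonempty X] [Nonempty Y]
    (W : X → Y → ℝ) (hW : IsChannel W) (hcr : Rcr W < Capacity W)
    (Q : X → ℝ) (hQ : IsDist Q)
    (hEr : ∃ R : ℝ, Rinf W < R ∧ 0 < ErQ W R Q) :
    ∀ ρ : ℝ, 0 ≤ ρ → deriv (deriv (fun t => Eo W t Q)) ρ < 0 :=
  statement10_aux W hW Q hQ hEr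

end RCB
end

section
/- Let W be a discrete memoryless channel with R_cr < C, and let Q ∈ P(𝒳) be such that the pair (Q,W) is nonsingular. Then for every ρ ∈ [0,1] and every λ ∈ ℝ, the second derivative of the cumulant generating function is strictly positive: Λ_ρ''(λ) > 0. -/
open Real BigOperators
open scoped Classical

namespace RCB

section AuxLSE

variable {ι : Type*} [Fintype ι]

private lemma var_iden (w a : ι → ℝ) :
    ∑ i, ∑ j, w i * w j * (a i - a j)^2
      = 2 * ((∑ i, w i * a i ^ 2) * (∑ i, w i) - (∑ i, w i * a i) ^ 2) := by
  have h : ∀ i j : ι, w i * w j * (a i - a j)^2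
      = (w i * a i ^ 2) * (w j) - (2 * (w i * a i)) * (w j * a j) + (w i) * (w j * a j ^ 2) := by
    intro i j; ring
  simp_rw [h]
  simp_rw [Finset.sum_add_distrib, Finset.sum_sub_distrib, ← Finset.mul_sum, ← Finset.sum_mul,
    ← Finset.mul_sum]
  ring

private lemma var_pos (w a : ι → ℝ) (hw : ∀ i, 0 ≤ w i) (i0 j0 : ι)
    (hi : 0 < w i0) (hj : 0 < w j0) (hne : a i0 ≠ a j0) :
    (∑ i, w i * a i) ^ 2 < (∑ i, w i * a i ^ 2) * (∑ i, w i) := by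
  have hnn : ∀ i j : ι, 0 ≤ w i * w j * (a i - a j)^2 := fun i j =>
    mul_nonneg (mul_nonneg (hw i) (hw j)) (sq_nonneg _)
  have hpos : 0 < ∑ i, ∑ j, w i * w j * (a i - a j)^2 := by
    refine Finset.sum_pos' (fun i _ => Finset.sum_nonneg fun j _ => hnn i j)
      ⟨i0, Finset.mem_univ _, ?_⟩
    refine Finset.sum_pos' (fun j _ => hnn i0 j) ⟨j0, Finset.mem_univ _, ?_⟩
    exact mul_pos (mul_pos hi hj)
      ((pow_pos (abs_pos.mpr (sub_ne_zero.mpr hne)) 2).trans_le (by rw [sq_abs]))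
  nlinarith [var_iden w a]

private lemma hexp (c t : ℝ) : HasDerivAt (fun s => Real.exp (s * c)) (Real.exp (t * c) * c) t :=
  (hasDerivAt_mul_const c).exp

private lemma lse_deriv2_pos (p a : ι → ℝ) (hp : ∀ i, 0 ≤ p i) (i0 j0 : ι)
    (hi : 0 < p i0) (hj : 0 < p j0) (hne : a i0 ≠ a j0) (t : ℝ) :
    0 < deriv (deriv (fun s => Real.log (∑ i, p i * Real.exp (s * a i)))) t := by
  set g : ℝ → ℝ := fun s => ∑ i, p i * Real.exp (s * a i) with hg
  set g1 : ℝ → ℝ := fun s => ∑ i, p i * (Real.exp (s * a i) * a i) with hg1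
  set g2 : ℝ → ℝ := fun s => ∑ i, p i * (Real.exp (s * a i) * a i * a i) with hg2
  have hgpos : ∀ s, 0 < g s := fun s =>
    Finset.sum_pos' (fun i _ => mul_nonneg (hp i) (Real.exp_pos _).le)
      ⟨i0, Finset.mem_univ _, mul_pos hi (Real.exp_pos _)⟩
  have hdg : ∀ s, HasDerivAt g (g1 s) s := fun s =>
    HasDerivAt.fun_sum fun i _ => ((hexp (a i) s).const_mul (p i))
  have hdg1 : ∀ s, HasDerivAt g1 (g2 s) s := fun s =>
    HasDerivAt.fun_sum fun i _ => (((hexp (a i) s).mul_const (a i)).const_mul (p i))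
  have hlog : deriv (fun s => Real.log (g s)) = fun s => g1 s / g s := by
    funext s
    exact (((hdg s).log (hgpos s).ne')).deriv
  rw [show (fun s => Real.log (∑ i, p i * Real.exp (s * a i))) = fun s => Real.log (g s) from rfl,
    hlog]
  have hdiv : HasDerivAt (fun s => g1 s / g s)
      ((g2 t * g t - g1 t * g1 t) / (g t)^2) t :=
    (hdg1 t).div (hdg t) (hgpos t).ne'
  rw [hdiv.deriv]
  apply div_pos _ (pow_pos (hgpos t) 2)
  have key : (∑ i, (p i * Real.exp (t * a i)) * a i) ^ 2
      < (∑ i, (p i * Real.exp (t * a i)) * a i ^ 2) * (∑ i, p i * Real.exp (t * a i)) :=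
    var_pos (fun i => p i * Real.exp (t * a i)) a
      (fun i => mul_nonneg (hp i) (Real.exp_pos _).le) i0 j0
      (mul_pos hi (Real.exp_pos _)) (mul_pos hj (Real.exp_pos _)) hne
  have e1 : g1 t = ∑ i, (p i * Real.exp (t * a i)) * a i := by
    simp only [hg1]; exact Finset.sum_congr rfl fun i _ => by ring
  have e2 : g2 t = ∑ i, (p i * Real.exp (t * a i)) * a i ^ 2 := by
    simp only [hg2]; exact Finset.sum_congr rfl fun i _ => by ring
  rw [e1, e2]
  nlinarith [key]

end AuxLSE

/-- Nonsingular case: for every `ρ ∈ [0,1]` and every `λ ∈ ℝ`,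
`Λ_ρ''(λ) > 0`. -/
theorem statement17 {X Y : Type*} [Fintype X] [Fintype Y] [Nonempty X] [Nonempty Y]
    (W : X → Y → ℝ) (hW : IsChannel W) (hcr : Rcr W < Capacity W)
    (Q : X → ℝ) (hQ : IsDist Q) (hns : ¬ Singular W Q) :
    ∀ ρ ∈ Set.Icc (0 : ℝ) 1, ∀ t : ℝ, 0 < deriv (deriv (fun s => Lam W Q ρ s)) t := by
  intro ρ hρ t
  obtain ⟨hW0, hW1⟩ := hW
  obtain ⟨hQ0, hQ1⟩ := hQ
  rw [Singular] at hns
  push_neg at hns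
  obtain ⟨x0, y0, z0, hpos, hne⟩ := hns
  have h1 : 0 < Q x0 * W x0 y0 ∧ 0 < Q z0 * W z0 y0 := by
    rcases mul_pos_iff.mp hpos with ⟨ha, hb⟩ | ⟨ha, hb⟩
    · exact ⟨ha, hb⟩
    · exact absurd hb (not_lt.mpr (mul_nonneg (hQ0 z0) (hW0 z0 y0)))
  have hQx : 0 < Q x0 ∧ 0 < W x0 y0 := by
    rcases mul_pos_iff.mp h1.1 with ⟨ha, hb⟩ | ⟨ha, hb⟩
    · exact ⟨ha, hb⟩
    · exact absurd hb (not_lt.mpr (hW0 x0 y0))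
  have hQz : 0 < Q z0 ∧ 0 < W z0 y0 := by
    rcases mul_pos_iff.mp h1.2 with ⟨ha, hb⟩ | ⟨ha, hb⟩
    · exact ⟨ha, hb⟩
    · exact absurd hb (not_lt.mpr (hW0 z0 y0))
  have h1ρ : (0:ℝ) < 1 + ρ := by linarith [hρ.1]
  have hS : ∀ b : Y, 0 ≤ ∑ a, Q a * W a b ^ (1/(1+ρ)) := fun b =>
    Finset.sum_nonneg fun a _ => mul_nonneg (hQ0 a) (Real.rpow_nonneg (hW0 a b) _)
  have hSy : 0 < ∑ a, Q a * W a y0 ^ (1/(1+ρ)) :=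
    Finset.sum_pos' (fun a _ => mul_nonneg (hQ0 a) (Real.rpow_nonneg (hW0 a y0) _))
      ⟨x0, Finset.mem_univ _, mul_pos hQx.1 (Real.rpow_pos_of_pos hQx.2 _)⟩
  have hnum : 0 < (∑ a, Q a * W a y0 ^ (1/(1+ρ))) ^ (1+ρ) := Real.rpow_pos_of_pos hSy _
  have hden : 0 < ∑ b, (∑ a, Q a * W a b ^ (1/(1+ρ))) ^ (1+ρ) :=
    Finset.sum_pos' (fun b _ => Real.rpow_nonneg (hS b) _) ⟨y0, Finset.mem_univ _, hnum⟩
  have hf : 0 < fRho W Q ρ y0 := div_pos hnum hden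
  set p : X × Y → ℝ := fun i => Q i.1 * W i.1 i.2 with hpdef
  set a : X × Y → ℝ := fun i => Real.log (fRho W Q ρ i.2 / W i.1 i.2) with hadef
  have hane : a (x0, y0) ≠ a (z0, y0) := by
    simp only [hadef]
    rw [Real.log_div hf.ne' hQx.2.ne', Real.log_div hf.ne' hQz.2.ne']
    intro h
    have hl : Real.log (W x0 y0) = Real.log (W z0 y0) := by linarith
    exact hne (Real.log_injOn_pos (Set.mem_Ioi.mpr hQx.2) (Set.mem_Ioi.mpr hQz.2) hl)
  have hfun : (fun s => Lam W Q ρ s)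
      = fun s => Real.log (∑ i : X × Y, p i * Real.exp (s * a i)) := by
    funext s
    rw [Lam, Fintype.sum_prod_type]
  rw [hfun]
  exact lse_deriv2_pos p a (fun i => mul_nonneg (hQ0 i.1) (hW0 i.1 i.2)) (x0, y0) (z0, y0)
    h1.1 h1.2 hane t

end RCB
end
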